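/- Let π ∈ S_n and 1 ≤ i ≤ n. If the degree of vertex i in the permutation graph G_π equals k, then |π⁻¹(i) − i| ≤ k and π⁻¹(i) − i ≡ k (mod 2). In particular, if i has degree 1 (is a leaf), then π⁻¹(i) ∈ {i−1, i+1}. -/

import Mathlib

/-- The permutation graph of `π`: vertices `0,…,n-1` (0-indexed version of `1,…,n`),
with `i < j` adjacent iff `π⁻¹ i > π⁻¹ j`. -/
def permGraph {n : ℕ} (π : Equiv.Perm (Fin n)) : SimpleGraph (Fin n) where
  Adj i j := (i < j ∧ π.symm j < π.symm i) ∨ (j < i ∧ π.symm i < π.symm j)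
  symm := ⟨by intro i j h; tauto⟩
  loopless := ⟨by intro i h; rcases h with ⟨h, _⟩ | ⟨h, _⟩ <;> exact lt_irrefl i h⟩

/-- `D` dominates `G`: every vertex is in `D` or adjacent to an element of `D`. -/
def Dominates {V : Type*} (G : SimpleGraph V) (D : Set V) : Prop :=
  ∀ v, v ∈ D ∨ ∃ d ∈ D, G.Adj v d

/-- The domination number: minimum cardinality of a dominating set. -/
noncomputable def domNumber {V : Type*} [Fintype V] (G : SimpleGraph V) : ℕ :=
  sInf {k | ∃ D : Finset V, D.card = k ∧ Dominates G ↑D}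

/-- Closed neighborhood `N[x]`. -/
def closedNbhd {V : Type*} (G : SimpleGraph V) (x : V) : Set V :=
  {y | y = x ∨ G.Adj x y}

/-- Degree of a vertex. -/
noncomputable def deg {V : Type*} (G : SimpleGraph V) (v : V) : ℕ :=
  (G.neighborSet v).ncard

theorem degree_position_bound {n : ℕ} (π : Equiv.Perm (Fin n)) (i : Fin n) (k : ℕ)
    (hdeg : deg (permGraph π) i = k) :
    (((π.symm i : ℤ) - (i : ℤ)).natAbs ≤ k ∧
      ((π.symm i : ℤ) - (i : ℤ)) % 2 = (k : ℤ) % 2) ∧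
    (k = 1 → (π.symm i : ℤ) = (i : ℤ) - 1 ∨ (π.symm i : ℤ) = (i : ℤ) + 1) := by
  classical
  set A := (Finset.univ.filter fun j => i < j ∧ π.symm j < π.symm i) with hA
  set B := (Finset.univ.filter fun j => j < i ∧ π.symm i < π.symm j) with hB
  set C := (Finset.univ.filter fun j => j < i ∧ π.symm j < π.symm i) with hC
  have hdCA : Disjoint C A := by
    rw [Finset.disjoint_left]
    intro j hj hj'
    simp only [hC, hA, Finset.mem_filter] at hj hj'
    exact absurd (hj.2.1.trans hj'.2.1) (lt_irrefl j)
  have hdCB : Disjoint C B := by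
    rw [Finset.disjoint_left]
    intro j hj hj'
    simp only [hC, hB, Finset.mem_filter] at hj hj'
    exact absurd (hj.2.2.trans hj'.2.2) (lt_irrefl _)
  have hdAB : Disjoint A B := by
    rw [Finset.disjoint_left]
    intro j hj hj'
    simp only [hA, hB, Finset.mem_filter] at hj hj'
    exact absurd (hj.2.1.trans hj'.2.1) (lt_irrefl _)
  -- card of positions below π.symm i
  have h1 : C.card + A.card = (π.symm i : ℕ) := by
    rw [← Finset.card_union_of_disjoint hdCA]
    have he : C ∪ A = Finset.univ.filter fun j => π.symm j < π.symm i := by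
      ext j
      simp only [hC, hA, Finset.mem_union, Finset.mem_filter, Finset.mem_univ, true_and]
      constructor
      · rintro (⟨_, h⟩ | ⟨_, h⟩) <;> exact h
      · intro h
        have hne : j ≠ i := fun hji => by simp [hji] at h
        rcases lt_or_gt_of_ne hne with h' | h'
        · exact Or.inl ⟨h', h⟩
        · exact Or.inr ⟨h', h⟩
    rw [he]
    have : (Finset.univ.filter fun j => π.symm j < π.symm i).card
        = (Finset.univ.filter fun x : Fin n => x < π.symm i).card := by
      apply Finset.card_bij' (fun j _ => π.symm j) (fun x _ => π x)
      · intro j hj; simpa using (by simpa using hj : π.symm j < π.symm i)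
      · intro x hx; simp; simpa using (by simpa using hx : x < π.symm i)
      · intro j _; simp
      · intro x _; simp
    rw [this]
    have : (Finset.univ.filter fun x : Fin n => x < π.symm i) = Finset.Iio (π.symm i) := by
      ext x; simp
    rw [this, Fin.card_Iio]
  have h2 : C.card + B.card = (i : ℕ) := by
    rw [← Finset.card_union_of_disjoint hdCB]
    have he : C ∪ B = Finset.univ.filter fun j => j < i := by
      ext j
      simp only [hC, hB, Finset.mem_union, Finset.mem_filter, Finset.mem_univ, true_and]
      constructor
      · rintro (⟨h, _⟩ | ⟨h, _⟩) <;> exact h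
      · intro h
        have hne : π.symm j ≠ π.symm i := fun hji => by
          have := π.symm.injective hji; omega
        rcases lt_or_gt_of_ne hne with h' | h'
        · exact Or.inl ⟨h, h'⟩
        · exact Or.inr ⟨h, h'⟩
    rw [he]
    have : (Finset.univ.filter fun j : Fin n => j < i) = Finset.Iio i := by
      ext x; simp
    rw [this, Fin.card_Iio]
  have h0 : A.card + B.card = k := by
    rw [← hdeg]
    unfold deg
    have : (permGraph π).neighborSet i = ↑(A ∪ B) := by
      ext j
      simp only [SimpleGraph.mem_neighborSet, permGraph, hA, hB, Finset.coe_union,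
        Set.mem_union, Finset.coe_filter, Set.mem_setOf_eq, Finset.mem_univ, true_and]
    rw [this, Set.ncard_coe_finset, Finset.card_union_of_disjoint hdAB]
  have hp : (π.symm i : ℤ) = ((π.symm i : ℕ) : ℤ) := rfl
  have hi : (i : ℤ) = ((i : ℕ) : ℤ) := rfl
  rw [hp, hi]
  omega
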